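/- Let μ, ξ, γ > 0 and define Λˢ(q) = ξ·√(q² + ξ/(2μ))·q² / D(q) where D(q) = 4μ²q²·√(q² + ξ/(2μ))·√(q² + ξ/μ) − (2μq² + ξ)². Then Λˢ(q) ≤ 0 for all real q, with equality only at q = 0. -/

import Mathlib

noncomputable def Ddet (μ ξ q : ℝ) : ℝ :=
  4 * μ ^ 2 * q ^ 2 * Real.sqrt (q ^ 2 + ξ / (2 * μ)) * Real.sqrt (q ^ 2 + ξ / μ)
    - (2 * μ * q ^ 2 + ξ) ^ 2

noncomputable def Λs (μ ξ q : ℝ) : ℝ :=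
  ξ * Real.sqrt (q ^ 2 + ξ / (2 * μ)) * q ^ 2 / Ddet μ ξ q

lemma Ddet_neg (μ ξ : ℝ) (hμ : 0 < μ) (hξ : 0 < ξ) (q : ℝ) : Ddet μ ξ q < 0 := by
  have ha : (0:ℝ) < q ^ 2 + ξ / (2 * μ) := by positivity
  have hb : (0:ℝ) < q ^ 2 + ξ / μ := by positivity
  set a := q ^ 2 + ξ / (2 * μ) with ha'
  set b := q ^ 2 + ξ / μ with hb'
  have hs1 : Real.sqrt a ^ 2 = a := Real.sq_sqrt ha.le
  have hs2 : Real.sqrt b ^ 2 = b := Real.sq_sqrt hb.le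
  have hs1n : 0 ≤ Real.sqrt a := Real.sqrt_nonneg a
  have hs2n : 0 ≤ Real.sqrt b := Real.sqrt_nonneg b
  have hP : (0:ℝ) < 2 * μ * q ^ 2 + ξ := by positivity
  have hA : 4 * μ ^ 2 * q ^ 2 * Real.sqrt a * Real.sqrt b < (2 * μ * q ^ 2 + ξ) ^ 2 := by
    have h2a : 2 * μ * a = 2 * μ * q ^ 2 + ξ := by rw [ha']; field_simp
    have h1b : μ * b = μ * q ^ 2 + ξ := by rw [hb']; field_simp
    have hsq : (4 * μ ^ 2 * q ^ 2 * Real.sqrt a * Real.sqrt b) ^ 2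
        < ((2 * μ * q ^ 2 + ξ) ^ 2) ^ 2 := by
      have key : (4 * μ ^ 2 * q ^ 2 * Real.sqrt a * Real.sqrt b) ^ 2
          = 8 * (μ * q ^ 2) ^ 2 * ((2 * μ * a) * (μ * b)) := by
        have e : (4 * μ ^ 2 * q ^ 2 * Real.sqrt a * Real.sqrt b) ^ 2
            = 16 * μ ^ 4 * q ^ 4 * Real.sqrt a ^ 2 * Real.sqrt b ^ 2 := by ring
        rw [e, hs1, hs2]; ring
      rw [key, h2a, h1b]
      have hx : 0 ≤ μ * q ^ 2 := mul_nonneg hμ.le (sq_nonneg q)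
      nlinarith [pow_nonneg hx 3, pow_nonneg hx 2, mul_nonneg (pow_nonneg hx 3) hξ.le,
        mul_nonneg (pow_nonneg hx 2) (sq_nonneg ξ), mul_nonneg hx (pow_nonneg hξ.le 3),
        pow_pos hξ 4]
    exact lt_of_pow_lt_pow_left₀ 2 (by positivity) hsq
  have : Ddet μ ξ q = 4 * μ ^ 2 * q ^ 2 * Real.sqrt a * Real.sqrt b
      - (2 * μ * q ^ 2 + ξ) ^ 2 := rfl
  linarith

/-- The surface tension growth-rate contribution Λˢ is nonpositive, vanishing only at q = 0. -/
theorem Λs_nonpos (μ ξ γ : ℝ) (hμ : 0 < μ) (hξ : 0 < ξ) (hγ : 0 < γ) (q : ℝ) :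
    Λs μ ξ q ≤ 0 ∧ (Λs μ ξ q = 0 → q = 0) := by
  have hD := Ddet_neg μ ξ hμ hξ q
  have hs1 : 0 < Real.sqrt (q ^ 2 + ξ / (2 * μ)) := Real.sqrt_pos.mpr (by positivity)
  have hN : 0 ≤ ξ * Real.sqrt (q ^ 2 + ξ / (2 * μ)) * q ^ 2 := by positivity
  constructor
  · exact div_nonpos_of_nonneg_of_nonpos hN hD.le
  · intro h
    rw [Λs, div_eq_zero_iff] at h
    rcases h with h | h
    · have hq2 : q ^ 2 = 0 := by
        rcases mul_eq_zero.mp h with h' | h'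
        · rcases mul_eq_zero.mp h' with h'' | h''
          · exact absurd h'' hξ.ne'
          · exact absurd h'' hs1.ne'
        · exact h'
      exact pow_eq_zero_iff (n := 2) (by norm_num) |>.mp hq2
    · exact absurd h hD.ne
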